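/- The map u ↦ icdf_u is an isometry from the metric space (P₂(Ω), W₂) onto the set I = {icdf_u : u ∈ P₂(Ω)}, equipped with the L²([0,1]) distance, and I is a convex subset of L²([0,1]). -/

import Mathlib

open MeasureTheory Set
open scoped ENNReal

noncomputable def cdf' (μ : Measure ℝ) (x : ℝ) : ℝ := (μ (Iic x)).toReal

noncomputable def icdf (μ : Measure ℝ) (s : ℝ) : ℝ := sInf {x | s < cdf' μ x}

section Basics
variable {xmin xmax : ℝ} {μ : Measure ℝ}

lemma cdf'_eq [IsProbabilityMeasure μ] : cdf' μ = ProbabilityTheory.cdf μ := by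
  funext x; rw [cdf', ProbabilityTheory.cdf_eq_real, measureReal_def]

lemma cdf'_mono [IsProbabilityMeasure μ] : Monotone (cdf' μ) := by
  rw [cdf'_eq]; exact ProbabilityTheory.monotone_cdf μ

lemma cdf'_nonneg [IsProbabilityMeasure μ] (x : ℝ) : 0 ≤ cdf' μ x := by
  rw [cdf'_eq]; exact ProbabilityTheory.cdf_nonneg μ x

lemma cdf'_le_one [IsProbabilityMeasure μ] (x : ℝ) : cdf' μ x ≤ 1 := by
  rw [cdf'_eq]; exact ProbabilityTheory.cdf_le_one μ x

lemma ofReal_cdf' [IsProbabilityMeasure μ] (x : ℝ) :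
    ENNReal.ofReal (cdf' μ x) = μ (Iic x) := by
  rw [cdf'_eq]; exact ProbabilityTheory.ofReal_cdf μ x

/-- right continuity in the form we need -/
lemma le_cdf'_of_forall [IsProbabilityMeasure μ] {s x : ℝ}
    (h : ∀ y, x < y → s ≤ cdf' μ y) : s ≤ cdf' μ x := by
  rw [cdf'_eq] at h ⊢
  have ht : Filter.Tendsto (ProbabilityTheory.cdf μ) (nhdsWithin x (Ioi x))
      (nhds (ProbabilityTheory.cdf μ x)) :=
    ((ProbabilityTheory.cdf μ).right_continuous x).mono_left
      (nhdsWithin_mono x Ioi_subset_Ici_self)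
  exact ge_of_tendsto ht (Filter.eventually_of_mem self_mem_nhdsWithin fun y hy => h y hy)

lemma cdf'_eq_one [IsProbabilityMeasure μ] (hs : ∀ᵐ x ∂μ, x ∈ Icc xmin xmax)
    {x : ℝ} (hx : xmax ≤ x) : cdf' μ x = 1 := by
  have h0 : μ (Iic x)ᶜ = 0 := by
    refine measure_mono_null ?_ hs
    intro y hy
    simp only [mem_compl_iff, mem_Iic, not_le] at hy
    rw [mem_compl_iff, mem_setOf_eq]
    exact fun hc => absurd hc.2 (by linarith)
  have : μ (Iic x) = 1 := by
    have := measure_add_measure_compl (μ := μ) (s := Iic x) measurableSet_Iic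
    rw [h0, add_zero] at this; simpa using this
  rw [cdf', this, ENNReal.toReal_one]

lemma cdf'_eq_zero [IsProbabilityMeasure μ] (hs : ∀ᵐ x ∂μ, x ∈ Icc xmin xmax)
    {x : ℝ} (hx : x < xmin) : cdf' μ x = 0 := by
  have h0 : μ (Iic x) = 0 := by
    refine measure_mono_null ?_ hs
    intro y hy
    simp only [mem_Iic] at hy
    rw [mem_compl_iff, mem_setOf_eq]
    exact fun hc => absurd hc.1 (by linarith)
  rw [cdf', h0, ENNReal.toReal_zero]

end Basics

section Quantile
variable {xmin xmax : ℝ} {μ : Measure ℝ}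

lemma icdf_set_nonempty [IsProbabilityMeasure μ] (hs : ∀ᵐ x ∂μ, x ∈ Icc xmin xmax)
    {s : ℝ} (h1 : s < 1) : {x | s < cdf' μ x}.Nonempty :=
  ⟨xmax, by simp only [mem_setOf_eq, cdf'_eq_one hs le_rfl]; exact h1⟩

lemma icdf_set_bddBelow [IsProbabilityMeasure μ] (hs : ∀ᵐ x ∂μ, x ∈ Icc xmin xmax)
    {s : ℝ} (h0 : 0 ≤ s) : BddBelow {x | s < cdf' μ x} := by
  refine ⟨xmin, fun y hy => ?_⟩
  by_contra hc
  push_neg at hc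
  rw [mem_setOf_eq, cdf'_eq_zero hs hc] at hy
  linarith

/-- if s < F x then icdf s ≤ x -/
lemma icdf_le_of_lt_cdf' [IsProbabilityMeasure μ] (hs : ∀ᵐ x ∂μ, x ∈ Icc xmin xmax)
    {s x : ℝ} (h0 : 0 ≤ s) (h : s < cdf' μ x) : icdf μ s ≤ x :=
  csInf_le (icdf_set_bddBelow hs h0) h

/-- if icdf s ≤ x then s ≤ F x -/
lemma le_cdf'_of_icdf_le [IsProbabilityMeasure μ] (hs : ∀ᵐ x ∂μ, x ∈ Icc xmin xmax)
    {s x : ℝ} (h1 : s < 1) (h : icdf μ s ≤ x) : s ≤ cdf' μ x := by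
  refine le_cdf'_of_forall (fun y hy => ?_)
  have hlt : sInf {x | s < cdf' μ x} < y := lt_of_le_of_lt h hy
  obtain ⟨z, hz, hzy⟩ := exists_lt_of_csInf_lt (icdf_set_nonempty hs h1) hlt
  exact le_of_lt (lt_of_lt_of_le hz (cdf'_mono hzy.le))

lemma icdf_mem [IsProbabilityMeasure μ] (hs : ∀ᵐ x ∂μ, x ∈ Icc xmin xmax)
    {s : ℝ} (h0 : 0 ≤ s) (h1 : s < 1) : icdf μ s ∈ Icc xmin xmax := by
  constructor
  · exact le_csInf (icdf_set_nonempty hs h1) fun y hy => by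
      by_contra hc
      push_neg at hc
      rw [mem_setOf_eq, cdf'_eq_zero hs hc] at hy
      linarith
  · exact icdf_le_of_lt_cdf' hs h0 (by rw [cdf'_eq_one hs le_rfl]; exact h1)

lemma icdf_monotoneOn [IsProbabilityMeasure μ] (hs : ∀ᵐ x ∂μ, x ∈ Icc xmin xmax) :
    MonotoneOn (icdf μ) (Ico (0:ℝ) 1) := by
  intro s hsm t htm hst
  exact le_csInf (icdf_set_nonempty hs htm.2) fun y hy =>
    csInf_le (icdf_set_bddBelow hs hsm.1) (lt_of_le_of_lt hst hy)

lemma icdf_of_neg {s : ℝ} (h : s < 0) : icdf μ s = 0 := by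
  have huniv : {x | s < cdf' μ x} = univ := by
    ext x; simp only [mem_setOf_eq, mem_univ, iff_true]
    exact lt_of_lt_of_le h (ENNReal.toReal_nonneg)
  rw [icdf, huniv]
  have : ¬ BddBelow (univ : Set ℝ) := by
    rintro ⟨b, hb⟩
    have := hb (mem_univ (b - 1))
    linarith
  exact Real.sInf_of_not_bddBelow this

lemma icdf_of_one_le [IsProbabilityMeasure μ] {s : ℝ} (h : 1 ≤ s) : icdf μ s = 0 := by
  have hempty : {x | s < cdf' μ x} = ∅ := by
    ext x
    simp only [mem_setOf_eq, mem_empty_iff_false, iff_false, not_lt]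
    exact le_trans (cdf'_le_one x) h
  rw [icdf, hempty, Real.sInf_empty]

/-- right continuity of icdf on [0,1) -/
lemma icdf_right_cont [IsProbabilityMeasure μ] (hs : ∀ᵐ x ∂μ, x ∈ Icc xmin xmax)
    {s : ℝ} (h0 : 0 ≤ s) (h1 : s < 1) {ε : ℝ} (hε : 0 < ε) :
    ∃ s' ∈ Ioo s 1, icdf μ s' ≤ icdf μ s + ε := by
  have hlt : sInf {x | s < cdf' μ x} < icdf μ s + ε := by
    rw [← icdf]; linarith
  obtain ⟨y, hy, hyl⟩ := exists_lt_of_csInf_lt (icdf_set_nonempty hs h1) hlt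
  rw [mem_setOf_eq] at hy
  refine ⟨(s + min (cdf' μ y) 1) / 2, ⟨by
      have : s < min (cdf' μ y) 1 := lt_min hy h1
      linarith, by
      have : min (cdf' μ y) 1 ≤ 1 := min_le_right _ _
      linarith⟩, ?_⟩
  have hs' : (s + min (cdf' μ y) 1) / 2 < cdf' μ y := by
    have h2 : s < min (cdf' μ y) 1 := lt_min hy h1
    have h3 : min (cdf' μ y) 1 ≤ cdf' μ y := min_le_left _ _
    linarith
  have h0' : 0 ≤ (s + min (cdf' μ y) 1) / 2 := by
    have : s < min (cdf' μ y) 1 := lt_min hy h1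
    linarith
  exact le_trans (icdf_le_of_lt_cdf' hs h0' hs') hyl.le

end Quantile

section Push
variable {xmin xmax : ℝ} {μ : Measure ℝ}

notation "lam" => Measure.restrict volume (Ioo (0:ℝ) 1)

lemma lam_prob : IsProbabilityMeasure lam := by
  constructor
  rw [Measure.restrict_apply_univ, Real.volume_Ioo]
  norm_num

/-- measure of {icdf ≤ x} inside (0,1) -/
lemma vol_icdf_le [IsProbabilityMeasure μ] (hs : ∀ᵐ x ∂μ, x ∈ Icc xmin xmax) (x : ℝ) :
    volume ({r | icdf μ r ≤ x} ∩ Ioo 0 1) = ENNReal.ofReal (cdf' μ x) := by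
  set F := cdf' μ x with hF
  have hF0 : 0 ≤ F := cdf'_nonneg x
  have hF1 : F ≤ 1 := cdf'_le_one x
  apply le_antisymm
  · calc volume ({r | icdf μ r ≤ x} ∩ Ioo 0 1) ≤ volume (Ioc 0 F) := by
          refine measure_mono ?_
          rintro r ⟨hr, hr2⟩
          exact ⟨hr2.1, le_cdf'_of_icdf_le hs hr2.2 hr⟩
      _ = ENNReal.ofReal F := by rw [Real.volume_Ioc, sub_zero]
  · calc ENNReal.ofReal F = volume (Ioo 0 F) := by rw [Real.volume_Ioo, sub_zero]
      _ ≤ volume ({r | icdf μ r ≤ x} ∩ Ioo 0 1) := by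
          refine measure_mono ?_
          rintro r ⟨hr1, hr2⟩
          exact ⟨icdf_le_of_lt_cdf' hs hr1.le hr2, hr1, lt_of_lt_of_le hr2 hF1⟩

end Push

section Ext
variable {xmin xmax : ℝ} {μ : Measure ℝ}

/-- global monotone extension of icdf -/
noncomputable def qext (xmax : ℝ) (μ : Measure ℝ) (s : ℝ) : ℝ :=
  if s < 1 then icdf μ (max s 0) else xmax

lemma qext_eq_icdf {s : ℝ} (h0 : 0 ≤ s) (h1 : s < 1) : qext xmax μ s = icdf μ s := by
  rw [qext, if_pos h1, max_eq_left h0]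

lemma qext_monotone [IsProbabilityMeasure μ] (hxx : xmin ≤ xmax)
    (hs : ∀ᵐ x ∂μ, x ∈ Icc xmin xmax) : Monotone (qext xmax μ) := by
  intro s t hst
  rcases lt_or_ge s 1 with h1 | h1
  · rcases lt_or_ge t 1 with h2 | h2
    · rw [qext, if_pos h1, qext, if_pos h2]
      exact icdf_monotoneOn hs ⟨le_max_right _ _, max_lt h1 one_pos⟩
        ⟨le_max_right _ _, max_lt h2 one_pos⟩ (max_le_max hst le_rfl)
    · rw [qext, if_pos h1, qext, if_neg (not_lt.2 h2)]
      exact (icdf_mem hs (le_max_right _ _) (max_lt h1 one_pos)).2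
  · rw [qext, if_neg (not_lt.2 h1), qext, if_neg (not_lt.2 (le_trans h1 hst))]

lemma qext_mem [IsProbabilityMeasure μ] (hxx : xmin ≤ xmax)
    (hs : ∀ᵐ x ∂μ, x ∈ Icc xmin xmax) (s : ℝ) : qext xmax μ s ∈ Icc xmin xmax := by
  rw [qext]
  split_ifs with h
  · exact icdf_mem hs (le_max_right _ _) (max_lt h one_pos)
  · exact ⟨hxx, le_rfl⟩

lemma qext_measurable [IsProbabilityMeasure μ] (hxx : xmin ≤ xmax)
    (hs : ∀ᵐ x ∂μ, x ∈ Icc xmin xmax) : Measurable (qext xmax μ) :=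
  (qext_monotone hxx hs).measurable

/-- inverse transform sampling: pushforward of uniform by qext is μ -/
lemma map_qext [IsProbabilityMeasure μ] (hxx : xmin ≤ xmax)
    (hs : ∀ᵐ x ∂μ, x ∈ Icc xmin xmax) :
    Measure.map (qext xmax μ) lam = μ := by
  haveI : IsProbabilityMeasure lam := lam_prob
  haveI : IsProbabilityMeasure (Measure.map (qext xmax μ) lam) :=
    Measure.isProbabilityMeasure_map (qext_measurable hxx hs).aemeasurable
  refine Measure.ext_of_Iic _ _ (fun x => ?_)
  rw [Measure.map_apply (qext_measurable hxx hs) measurableSet_Iic,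
    Measure.restrict_apply ((qext_measurable hxx hs) measurableSet_Iic)]
  have hseteq : qext xmax μ ⁻¹' (Iic x) ∩ Ioo 0 1 = {r | icdf μ r ≤ x} ∩ Ioo 0 1 := by
    ext r
    simp only [mem_inter_iff, mem_preimage, mem_Iic, mem_setOf_eq, mem_Ioo]
    constructor
    · rintro ⟨h1, h2⟩
      rw [qext_eq_icdf h2.1.le h2.2] at h1
      exact ⟨h1, h2⟩
    · rintro ⟨h1, h2⟩
      rw [qext_eq_icdf h2.1.le h2.2]
      exact ⟨h1, h2⟩
  rw [hseteq, vol_icdf_le hs x, ofReal_cdf']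

end Ext

section LemmaP
variable {xmin xmax : ℝ}

/-- icdf of the pushforward of the uniform measure by a monotone right-continuous ψ -/
lemma icdf_map_eq (ψ : ℝ → ℝ) (hmeas : Measurable ψ)
    (hmono : MonotoneOn ψ (Ico (0:ℝ) 1))
    (hrc : ∀ s ∈ Ico (0:ℝ) 1, ∀ ε > (0:ℝ), ∃ s' ∈ Ioo s 1, ψ s' ≤ ψ s + ε)
    (hbd : ∀ r ∈ Ico (0:ℝ) 1, ψ r ∈ Icc xmin xmax)
    {s : ℝ} (hsm : s ∈ Ico (0:ℝ) 1) :
    icdf (Measure.map ψ lam) s = ψ s := by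
  set ρ := Measure.map ψ lam with hρ
  have hcdf : ∀ x, cdf' ρ x = (volume (ψ ⁻¹' (Iic x) ∩ Ioo 0 1)).toReal := by
    intro x
    rw [cdf', hρ, Measure.map_apply hmeas measurableSet_Iic,
      Measure.restrict_apply (hmeas measurableSet_Iic)]
  have hfin : ∀ x, volume (ψ ⁻¹' (Iic x) ∩ Ioo 0 1) ≤ 1 := by
    intro x
    calc volume (ψ ⁻¹' (Iic x) ∩ Ioo 0 1) ≤ volume (Ioo (0:ℝ) 1) :=
          measure_mono inter_subset_right
      _ = 1 := by rw [Real.volume_Ioo]; norm_num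
  -- (a) every element of the defining set is ≥ ψ s
  have ha : ∀ x, s < cdf' ρ x → ψ s ≤ x := by
    intro x hx
    rw [hcdf] at hx
    by_contra hc
    push_neg at hc
    have hsub : ψ ⁻¹' (Iic x) ∩ Ioo 0 1 ⊆ Ioc 0 s := by
      rintro r ⟨hr1, hr2⟩
      refine ⟨hr2.1, ?_⟩
      by_contra hrs
      push_neg at hrs
      have : ψ s ≤ ψ r := hmono ⟨hsm.1, hsm.2⟩ ⟨hsm.1.trans hrs.le, hr2.2⟩ hrs.le
      exact absurd (this.trans hr1) (not_le.2 hc)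
    have hle : volume (ψ ⁻¹' (Iic x) ∩ Ioo 0 1) ≤ ENNReal.ofReal s := by
      refine le_trans (measure_mono hsub) ?_
      rw [Real.volume_Ioc, sub_zero]
    have := ENNReal.toReal_mono (by simp) hle
    rw [ENNReal.toReal_ofReal hsm.1] at this
    linarith
  -- (b) ψ s + ε is in the defining set
  have hb : ∀ ε > (0:ℝ), s < cdf' ρ (ψ s + ε) := by
    intro ε hε
    obtain ⟨s', hs', hψ⟩ := hrc s hsm ε hε
    rw [hcdf]
    have hsub : Ioo 0 s' ⊆ ψ ⁻¹' (Iic (ψ s + ε)) ∩ Ioo 0 1 := by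
      rintro r ⟨hr1, hr2⟩
      refine ⟨?_, hr1, hr2.trans hs'.2⟩
      rw [mem_preimage, mem_Iic]
      exact le_trans (hmono ⟨hr1.le, hr2.trans hs'.2⟩ ⟨(hsm.1.trans hs'.1.le), hs'.2⟩ hr2.le) hψ
    have hge : ENNReal.ofReal s' ≤ volume (ψ ⁻¹' (Iic (ψ s + ε)) ∩ Ioo 0 1) := by
      refine le_trans (le_of_eq ?_) (measure_mono hsub)
      rw [Real.volume_Ioo, sub_zero]
    have h2 := ENNReal.toReal_mono (lt_of_le_of_lt (hfin _) (by norm_num)).ne hge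
    rw [ENNReal.toReal_ofReal (hsm.1.trans hs'.1.le)] at h2
    linarith [hs'.1]
  -- combine
  have hne : {x | s < cdf' ρ x}.Nonempty := ⟨ψ s + 1, hb 1 one_pos⟩
  have hbdd : BddBelow {x | s < cdf' ρ x} := ⟨ψ s, fun x hx => ha x hx⟩
  apply le_antisymm
  · refine le_of_forall_pos_le_add (fun ε hε => ?_)
    exact csInf_le hbdd (hb ε hε)
  · exact le_csInf hne fun x hx => ha x hx

end LemmaP

/-- Membership in P₂(Ω) for Ω = [xmin, xmax]: probability measure supported in Ω with
finite second moment. -/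
def memP2 (xmin xmax : ℝ) (μ : Measure ℝ) : Prop :=
  IsProbabilityMeasure μ ∧ (∀ᵐ x ∂μ, x ∈ Icc xmin xmax) ∧ Integrable (fun x => x ^ 2) μ

section ConvexPart

lemma sq_le_of_mem_Icc {xmin xmax x : ℝ} (h : x ∈ Icc xmin xmax) :
    x ^ 2 ≤ max (xmin ^ 2) (xmax ^ 2) := by
  rcases le_total x 0 with h0 | h0
  · exact le_max_of_le_left (by nlinarith [h.1, h.2])
  · exact le_max_of_le_right (by nlinarith [h.1, h.2])

lemma memP2_of_map {xmin xmax : ℝ} (hxx : xmin ≤ xmax) (ψ : ℝ → ℝ) (hmeas : Measurable ψ)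
    (hbd : ∀ r ∈ Ico (0:ℝ) 1, ψ r ∈ Icc xmin xmax) :
    memP2 xmin xmax (Measure.map ψ lam) := by
  haveI : IsProbabilityMeasure lam := lam_prob
  haveI hprob : IsProbabilityMeasure (Measure.map ψ lam) :=
    Measure.isProbabilityMeasure_map hmeas.aemeasurable
  have hsupp : ∀ᵐ x ∂(Measure.map ψ lam), x ∈ Icc xmin xmax := by
    refine (MeasureTheory.ae_map_iff hmeas.aemeasurable measurableSet_Icc).2 ?_
    rw [ae_restrict_iff' measurableSet_Ioo]
    exact ae_of_all _ fun r hr => hbd r ⟨hr.1.le, hr.2⟩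
  refine ⟨hprob, hsupp, ?_⟩
  refine (integrable_const (max (xmin ^ 2) (xmax ^ 2))).mono'
    ((measurable_id.pow_const 2).aestronglyMeasurable) ?_
  filter_upwards [hsupp] with x hxm
  rw [Real.norm_eq_abs, abs_of_nonneg (sq_nonneg x)]
  exact sq_le_of_mem_Icc hxm

lemma convex_icdf (xmin xmax : ℝ) (hxx : xmin ≤ xmax) :
    Convex ℝ {f : ℝ → ℝ | ∃ μ : Measure ℝ, memP2 xmin xmax μ ∧ f = icdf μ} := by
  rintro f ⟨μ, ⟨hμp, hμs, -⟩, rfl⟩ f' ⟨ν, ⟨hνp, hνs, -⟩, rfl⟩ a b ha hb hab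
  haveI := hμp; haveI := hνp
  set ψ : ℝ → ℝ := fun s => a * qext xmax μ s + b * qext xmax ν s with hψdef
  have hψmono : Monotone ψ := fun s t hst => add_le_add
    (mul_le_mul_of_nonneg_left (qext_monotone hxx hμs hst) ha)
    (mul_le_mul_of_nonneg_left (qext_monotone hxx hνs hst) hb)
  have hmeas : Measurable ψ := hψmono.measurable
  have hbd : ∀ r ∈ Ico (0:ℝ) 1, ψ r ∈ Icc xmin xmax := by
    intro r _
    obtain ⟨h1, h2⟩ := qext_mem hxx hμs (μ := μ) r
    obtain ⟨h3, h4⟩ := qext_mem hxx hνs (μ := ν) r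
    simp only [hψdef]
    have e1 : a * xmin + b * xmin = xmin := by rw [← add_mul, hab, one_mul]
    have e2 : a * xmax + b * xmax = xmax := by rw [← add_mul, hab, one_mul]
    constructor
    · have := mul_le_mul_of_nonneg_left h1 ha
      have := mul_le_mul_of_nonneg_left h3 hb
      linarith
    · have := mul_le_mul_of_nonneg_left h2 ha
      have := mul_le_mul_of_nonneg_left h4 hb
      linarith
  have hψicdf : ∀ s ∈ Ico (0:ℝ) 1, ψ s = a * icdf μ s + b * icdf ν s := by
    intro s hsm
    rw [hψdef]
    simp only
    rw [qext_eq_icdf hsm.1 hsm.2, qext_eq_icdf hsm.1 hsm.2]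
  have hrc : ∀ s ∈ Ico (0:ℝ) 1, ∀ ε > (0:ℝ), ∃ s' ∈ Ioo s 1, ψ s' ≤ ψ s + ε := by
    intro s hsm ε hε
    obtain ⟨s₁, hs₁, hq₁⟩ := icdf_right_cont hμs hsm.1 hsm.2 hε
    obtain ⟨s₂, hs₂, hq₂⟩ := icdf_right_cont hνs hsm.1 hsm.2 hε
    refine ⟨min s₁ s₂, ⟨lt_min hs₁.1 hs₂.1, lt_of_le_of_lt (min_le_left _ _) hs₁.2⟩, ?_⟩
    have hm : min s₁ s₂ ∈ Ico (0:ℝ) 1 :=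
      ⟨hsm.1.trans (lt_min hs₁.1 hs₂.1).le, lt_of_le_of_lt (min_le_left _ _) hs₁.2⟩
    rw [hψicdf _ hm, hψicdf _ hsm]
    have h1 : icdf μ (min s₁ s₂) ≤ icdf μ s + ε := by
      refine le_trans ?_ hq₁
      exact icdf_monotoneOn hμs hm ⟨hsm.1.trans hs₁.1.le, hs₁.2⟩ (min_le_left _ _)
    have h2 : icdf ν (min s₁ s₂) ≤ icdf ν s + ε := by
      refine le_trans ?_ hq₂
      exact icdf_monotoneOn hνs hm ⟨hsm.1.trans hs₂.1.le, hs₂.2⟩ (min_le_right _ _)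
    nlinarith
  have hψmonoOn : MonotoneOn ψ (Ico (0:ℝ) 1) := hψmono.monotoneOn _
  have hmem := memP2_of_map hxx ψ hmeas hbd
  haveI : IsProbabilityMeasure (Measure.map ψ lam) := hmem.1
  refine ⟨Measure.map ψ lam, hmem, ?_⟩
  funext s
  simp only [Pi.add_apply, Pi.smul_apply, smul_eq_mul]
  rcases lt_or_ge s 0 with hneg | h0
  · rw [icdf_of_neg hneg, icdf_of_neg hneg, icdf_of_neg hneg]; ring
  rcases lt_or_ge s 1 with h1 | h1
  · rw [icdf_map_eq ψ hmeas hψmonoOn hrc hbd ⟨h0, h1⟩, hψicdf s ⟨h0, h1⟩]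
  · rw [icdf_of_one_le h1, icdf_of_one_le h1, icdf_of_one_le h1]; ring

end ConvexPart

section Hoeffding

open ENNReal

lemma hoeffding (c M : ℝ) (π : Measure (ℝ × ℝ)) [IsProbabilityMeasure π]
    (hae : ∀ᵐ p ∂π, p.1 ∈ Icc c M ∧ p.2 ∈ Icc c M) :
    ∫⁻ p, ENNReal.ofReal ((p.1 - c) * (p.2 - c)) ∂π
      = ∫⁻ q in Icc c M ×ˢ Icc c M, π {p | q.1 < p.1 ∧ q.2 < p.2} := by
  have hSm : MeasurableSet {z : (ℝ × ℝ) × (ℝ × ℝ) | z.1.1 < z.2.1 ∧ z.1.2 < z.2.2} :=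
    (measurableSet_lt (measurable_fst.fst) (measurable_snd.fst)).inter
      (measurableSet_lt (measurable_fst.snd) (measurable_snd.snd))
  have hslice : ∀ q : ℝ × ℝ, MeasurableSet {p : ℝ × ℝ | q.1 < p.1 ∧ q.2 < p.2} := fun q =>
    (measurableSet_lt measurable_const measurable_fst).inter
      (measurableSet_lt measurable_const measurable_snd)
  have htslice : ∀ p : ℝ × ℝ, MeasurableSet {q : ℝ × ℝ | q.1 < p.1 ∧ q.2 < p.2} := fun p =>
    (measurableSet_lt measurable_fst measurable_const).inter
      (measurableSet_lt measurable_snd measurable_const)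
  set S := {z : (ℝ × ℝ) × (ℝ × ℝ) | z.1.1 < z.2.1 ∧ z.1.2 < z.2.2} with hS
  -- RHS as double lintegral
  have step1 : ∫⁻ q in Icc c M ×ˢ Icc c M, π {p | q.1 < p.1 ∧ q.2 < p.2}
      = ∫⁻ q in Icc c M ×ˢ Icc c M, ∫⁻ p, S.indicator 1 (q, p) ∂π := by
    refine lintegral_congr (fun q => ?_)
    rw [← lintegral_indicator_one (hslice q)]
    exact lintegral_congr (fun p => rfl)
  have hunc : Measurable (Function.uncurry fun q p => S.indicator (1 : (ℝ×ℝ)×(ℝ×ℝ) → ℝ≥0∞) (q, p)) := by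
    have : (Function.uncurry fun q p => S.indicator (1 : (ℝ×ℝ)×(ℝ×ℝ) → ℝ≥0∞) (q, p))
        = S.indicator 1 := by
      funext z
      rcases z with ⟨q, p⟩
      rfl
    rw [this]
    exact measurable_one.indicator hSm
  have step2 : ∫⁻ q in Icc c M ×ˢ Icc c M, ∫⁻ p, S.indicator 1 (q, p) ∂π
      = ∫⁻ p, ∫⁻ q in Icc c M ×ˢ Icc c M, S.indicator 1 (q, p) ∂volume ∂π :=
    lintegral_lintegral_swap hunc.aemeasurable
  have step3 : ∀ p : ℝ × ℝ, ∫⁻ q in Icc c M ×ˢ Icc c M, S.indicator 1 (q, p) ∂volume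
      = volume ({q : ℝ × ℝ | q.1 < p.1 ∧ q.2 < p.2} ∩ Icc c M ×ˢ Icc c M) := by
    intro p
    have : ∀ q : ℝ × ℝ, S.indicator (1 : (ℝ×ℝ)×(ℝ×ℝ) → ℝ≥0∞) (q, p)
        = ({q : ℝ × ℝ | q.1 < p.1 ∧ q.2 < p.2}).indicator 1 q := by
      intro q
      rfl
    simp_rw [this]
    rw [lintegral_indicator_one (htslice p), Measure.restrict_apply (htslice p)]
  have step4 : ∀ᵐ p ∂π, volume ({q : ℝ × ℝ | q.1 < p.1 ∧ q.2 < p.2} ∩ Icc c M ×ˢ Icc c M)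
      = ENNReal.ofReal ((p.1 - c) * (p.2 - c)) := by
    filter_upwards [hae] with p hp
    have hset : {q : ℝ × ℝ | q.1 < p.1 ∧ q.2 < p.2} ∩ Icc c M ×ˢ Icc c M
        = Ico c p.1 ×ˢ Ico c p.2 := by
      ext q
      simp only [mem_inter_iff, mem_setOf_eq, mem_prod, mem_Icc, mem_Ico]
      constructor
      · rintro ⟨⟨h1, h2⟩, ⟨h3, h4⟩, ⟨h5, h6⟩⟩
        exact ⟨⟨h3, h1⟩, ⟨h5, h2⟩⟩
      · rintro ⟨⟨h1, h2⟩, ⟨h3, h4⟩⟩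
        refine ⟨⟨h2, h4⟩, ⟨h1, ?_⟩, ⟨h3, ?_⟩⟩
        · linarith [hp.1.2]
        · linarith [hp.2.2]
    rw [hset, Measure.volume_eq_prod, Measure.prod_prod, Real.volume_Ico, Real.volume_Ico,
      ← ENNReal.ofReal_mul (by linarith [hp.1.1] : (0:ℝ) ≤ p.1 - c)]
  rw [step1, step2]
  rw [lintegral_congr (step3)]
  exact (lintegral_congr_ae step4).symm

end Hoeffding

section Compare
variable {xmin xmax : ℝ} {u v : Measure ℝ}

lemma measure_Ioi_eq [IsProbabilityMeasure u] (x : ℝ) :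
    u (Ioi x) = ENNReal.ofReal (1 - cdf' u x) := by
  rw [← compl_Iic, measure_compl measurableSet_Iic (measure_ne_top u _), measure_univ,
    ENNReal.ofReal_sub _ (cdf'_nonneg x), ofReal_cdf', ENNReal.ofReal_one]

lemma coupling_ae [IsProbabilityMeasure u] [IsProbabilityMeasure v] {π : Measure (ℝ × ℝ)}
    [IsProbabilityMeasure π] (h1 : π.map Prod.fst = u) (h2 : π.map Prod.snd = v)
    (hus : ∀ᵐ x ∂u, x ∈ Icc xmin xmax) (hvs : ∀ᵐ x ∂v, x ∈ Icc xmin xmax) :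
    ∀ᵐ p ∂π, p.1 ∈ Icc xmin xmax ∧ p.2 ∈ Icc xmin xmax := by
  have ha : ∀ᵐ p ∂π, p.1 ∈ Icc xmin xmax := by
    rw [← h1] at hus
    exact (MeasureTheory.ae_map_iff measurable_fst.aemeasurable measurableSet_Icc).1 hus
  have hb : ∀ᵐ p ∂π, p.2 ∈ Icc xmin xmax := by
    rw [← h2] at hvs
    exact (MeasureTheory.ae_map_iff measurable_snd.aemeasurable measurableSet_Icc).1 hvs
  exact ha.and hb

/-- upper bound on joint tail for any coupling -/
lemma coupling_slice_le [IsProbabilityMeasure u] [IsProbabilityMeasure v]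
    {π : Measure (ℝ × ℝ)} [IsProbabilityMeasure π]
    (h1 : π.map Prod.fst = u) (h2 : π.map Prod.snd = v) (q : ℝ × ℝ) :
    π {p | q.1 < p.1 ∧ q.2 < p.2}
      ≤ min (ENNReal.ofReal (1 - cdf' u q.1)) (ENNReal.ofReal (1 - cdf' v q.2)) := by
  refine le_min ?_ ?_
  · calc π {p | q.1 < p.1 ∧ q.2 < p.2} ≤ π (Prod.fst ⁻¹' (Ioi q.1)) :=
        measure_mono (fun p hp => hp.1)
      _ = u (Ioi q.1) := by
        rw [← Measure.map_apply measurable_fst measurableSet_Ioi, h1]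
      _ = ENNReal.ofReal (1 - cdf' u q.1) := measure_Ioi_eq _
  · calc π {p | q.1 < p.1 ∧ q.2 < p.2} ≤ π (Prod.snd ⁻¹' (Ioi q.2)) :=
        measure_mono (fun p hp => hp.2)
      _ = v (Ioi q.2) := by
        rw [← Measure.map_apply measurable_snd measurableSet_Ioi, h2]
      _ = ENNReal.ofReal (1 - cdf' v q.2) := measure_Ioi_eq _

/-- lower bound on joint tail for the monotone coupling -/
lemma pistar_slice_ge [IsProbabilityMeasure u] [IsProbabilityMeasure v]
    (hxx : xmin ≤ xmax) (hus : ∀ᵐ x ∂u, x ∈ Icc xmin xmax) (hvs : ∀ᵐ x ∂v, x ∈ Icc xmin xmax)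
    (q : ℝ × ℝ) :
    min (ENNReal.ofReal (1 - cdf' u q.1)) (ENNReal.ofReal (1 - cdf' v q.2))
      ≤ (Measure.map (fun r => (qext xmax u r, qext xmax v r)) lam)
          {p | q.1 < p.1 ∧ q.2 < p.2} := by
  have hΦ : Measurable (fun r => (qext xmax u r, qext xmax v r)) :=
    (qext_measurable hxx hus).prodMk (qext_measurable hxx hvs)
  have hsl : MeasurableSet {p : ℝ × ℝ | q.1 < p.1 ∧ q.2 < p.2} :=
    (measurableSet_lt measurable_const measurable_fst).inter
      (measurableSet_lt measurable_const measurable_snd)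
  rw [Measure.map_apply hΦ hsl, Measure.restrict_apply (hΦ hsl)]
  set m := max (cdf' u q.1) (cdf' v q.2) with hm
  have hm0 : 0 ≤ m := le_trans (cdf'_nonneg q.1) (le_max_left _ _)
  have hm1 : m ≤ 1 := max_le (cdf'_le_one _) (cdf'_le_one _)
  have hsub : Ioo m 1 ⊆ (fun r => (qext xmax u r, qext xmax v r)) ⁻¹'
      {p : ℝ × ℝ | q.1 < p.1 ∧ q.2 < p.2} ∩ Ioo 0 1 := by
    rintro r ⟨hr1, hr2⟩
    have hr01 : r ∈ Ioo (0:ℝ) 1 := ⟨lt_of_le_of_lt hm0 hr1, hr2⟩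
    refine ⟨?_, hr01⟩
    rw [mem_preimage, mem_setOf_eq, qext_eq_icdf hr01.1.le hr01.2,
      qext_eq_icdf hr01.1.le hr01.2]
    constructor
    · by_contra hc
      push_neg at hc
      have := le_cdf'_of_icdf_le hus hr01.2 hc
      have := le_max_left (cdf' u q.1) (cdf' v q.2)
      linarith
    · by_contra hc
      push_neg at hc
      have := le_cdf'_of_icdf_le hvs hr01.2 hc
      have := le_max_right (cdf' u q.1) (cdf' v q.2)
      linarith
  refine le_trans ?_ (measure_mono hsub)
  rw [Real.volume_Ioo]
  rcases le_total (cdf' u q.1) (cdf' v q.2) with h | h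
  · rw [min_eq_right (ENNReal.ofReal_le_ofReal (by linarith)), hm, max_eq_right h]
  · rw [min_eq_left (ENNReal.ofReal_le_ofReal (by linarith)), hm, max_eq_left h]

end Compare

section CostCompare
variable {xmin xmax : ℝ} {u v : Measure ℝ}

lemma meas_sq1 (c : ℝ) : Measurable (fun p : ℝ × ℝ => ENNReal.ofReal ((p.1 - c) ^ 2)) :=
  ENNReal.measurable_ofReal.comp ((measurable_fst.sub measurable_const).pow_const 2)

lemma meas_sq2 (c : ℝ) : Measurable (fun p : ℝ × ℝ => ENNReal.ofReal ((p.2 - c) ^ 2)) :=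
  ENNReal.measurable_ofReal.comp ((measurable_snd.sub measurable_const).pow_const 2)

lemma meas_prodc (c : ℝ) :
    Measurable (fun p : ℝ × ℝ => ENNReal.ofReal ((p.1 - c) * (p.2 - c))) :=
  ENNReal.measurable_ofReal.comp
    ((measurable_fst.sub measurable_const).mul (measurable_snd.sub measurable_const))

lemma meas_cost : Measurable (fun p : ℝ × ℝ => ENNReal.ofReal ((p.1 - p.2) ^ 2)) :=
  ENNReal.measurable_ofReal.comp ((measurable_fst.sub measurable_snd).pow_const 2)

/-- algebraic identity between lintegrals, for any measure supported in the square -/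
lemma cost_identity (c M : ℝ) (π : Measure (ℝ × ℝ)) [IsProbabilityMeasure π]
    (hae : ∀ᵐ p ∂π, p.1 ∈ Icc c M ∧ p.2 ∈ Icc c M) :
    (∫⁻ p, ENNReal.ofReal ((p.1 - p.2) ^ 2) ∂π)
      + 2 * ∫⁻ p, ENNReal.ofReal ((p.1 - c) * (p.2 - c)) ∂π
    = (∫⁻ p, ENNReal.ofReal ((p.1 - c) ^ 2) ∂π)
      + ∫⁻ p, ENNReal.ofReal ((p.2 - c) ^ 2) ∂π := by
  rw [← lintegral_const_mul 2 (meas_prodc c), ← lintegral_add_left meas_cost,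
    ← lintegral_add_left (meas_sq1 c)]
  refine lintegral_congr_ae ?_
  filter_upwards [hae] with p hp
  have hx : c ≤ p.1 := hp.1.1
  have hy : c ≤ p.2 := hp.2.1
  have h2 : (2 : ℝ≥0∞) = ENNReal.ofReal 2 := by norm_num
  rw [h2, ← ENNReal.ofReal_mul (by norm_num : (0:ℝ) ≤ 2),
    ← ENNReal.ofReal_add (sq_nonneg _) (by nlinarith : (0:ℝ) ≤ 2 * ((p.1 - c) * (p.2 - c))),
    ← ENNReal.ofReal_add (sq_nonneg _) (sq_nonneg _)]
  congr 1
  ring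

lemma lint_fst {π : Measure (ℝ × ℝ)} (h1 : π.map Prod.fst = u) (f : ℝ → ℝ≥0∞)
    (hf : Measurable f) : ∫⁻ p, f p.1 ∂π = ∫⁻ x, f x ∂u := by
  rw [← h1, lintegral_map hf measurable_fst]

lemma lint_snd {π : Measure (ℝ × ℝ)} (h2 : π.map Prod.snd = v) (f : ℝ → ℝ≥0∞)
    (hf : Measurable f) : ∫⁻ p, f p.2 ∂π = ∫⁻ y, f y ∂v := by
  rw [← h2, lintegral_map hf measurable_snd]

/-- bound a lintegral by a constant, given an a.e. bound -/
lemma lint_le_const {π : Measure (ℝ × ℝ)} [IsProbabilityMeasure π] {f : ℝ × ℝ → ℝ} {C : ℝ}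
    (h : ∀ᵐ p ∂π, f p ≤ C) :
    ∫⁻ p, ENNReal.ofReal (f p) ∂π ≤ ENNReal.ofReal C := by
  calc ∫⁻ p, ENNReal.ofReal (f p) ∂π ≤ ∫⁻ _, ENNReal.ofReal C ∂π := by
        refine lintegral_mono_ae ?_
        filter_upwards [h] with p hp
        exact ENNReal.ofReal_le_ofReal hp
    _ = ENNReal.ofReal C := by rw [lintegral_const, measure_univ, mul_one]

/-- main comparison: if the joint tails of π are dominated by those of π', then
the transport cost of π' is at most that of π -/
lemma cost_compare [IsProbabilityMeasure u] [IsProbabilityMeasure v]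
    (hxx : xmin ≤ xmax)
    (hus : ∀ᵐ x ∂u, x ∈ Icc xmin xmax) (hvs : ∀ᵐ x ∂v, x ∈ Icc xmin xmax)
    {π π' : Measure (ℝ × ℝ)} [IsProbabilityMeasure π] [IsProbabilityMeasure π']
    (h1 : π.map Prod.fst = u) (h2 : π.map Prod.snd = v)
    (h1' : π'.map Prod.fst = u) (h2' : π'.map Prod.snd = v)
    (hT : ∀ q : ℝ × ℝ, π {p | q.1 < p.1 ∧ q.2 < p.2} ≤ π' {p | q.1 < p.1 ∧ q.2 < p.2}) :
    ∫⁻ p, ENNReal.ofReal ((p.1 - p.2) ^ 2) ∂π'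
      ≤ ∫⁻ p, ENNReal.ofReal ((p.1 - p.2) ^ 2) ∂π := by
  set c := xmin
  set M := xmax
  have haeπ := coupling_ae h1 h2 hus hvs
  have haeπ' := coupling_ae h1' h2' hus hvs
  have hP : ∫⁻ p, ENNReal.ofReal ((p.1 - c) * (p.2 - c)) ∂π
      ≤ ∫⁻ p, ENNReal.ofReal ((p.1 - c) * (p.2 - c)) ∂π' := by
    rw [hoeffding c M π haeπ, hoeffding c M π' haeπ']
    exact lintegral_mono fun q => hT q
  have hPfin : 2 * ∫⁻ p, ENNReal.ofReal ((p.1 - c) * (p.2 - c)) ∂π' ≠ ⊤ := by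
    refine ENNReal.mul_ne_top (by norm_num) ?_
    have hbd : ∀ᵐ p ∂π', (p.1 - c) * (p.2 - c) ≤ (M - c) * (M - c) := by
      filter_upwards [haeπ'] with p hp
      nlinarith [hp.1.1, hp.1.2, hp.2.1, hp.2.2]
    exact ne_top_of_le_ne_top ENNReal.ofReal_ne_top (lint_le_const hbd)
  have hA : ∫⁻ p, ENNReal.ofReal ((p.1 - c) ^ 2) ∂π = ∫⁻ p, ENNReal.ofReal ((p.1 - c) ^ 2) ∂π' := by
    rw [lint_fst h1 (fun x => ENNReal.ofReal ((x - c) ^ 2))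
        (ENNReal.measurable_ofReal.comp ((measurable_id.sub measurable_const).pow_const 2)),
      lint_fst h1' (fun x => ENNReal.ofReal ((x - c) ^ 2))
        (ENNReal.measurable_ofReal.comp ((measurable_id.sub measurable_const).pow_const 2))]
  have hB : ∫⁻ p, ENNReal.ofReal ((p.2 - c) ^ 2) ∂π = ∫⁻ p, ENNReal.ofReal ((p.2 - c) ^ 2) ∂π' := by
    rw [lint_snd h2 (fun x => ENNReal.ofReal ((x - c) ^ 2))
        (ENNReal.measurable_ofReal.comp ((measurable_id.sub measurable_const).pow_const 2)),
      lint_snd h2' (fun x => ENNReal.ofReal ((x - c) ^ 2))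
        (ENNReal.measurable_ofReal.comp ((measurable_id.sub measurable_const).pow_const 2))]
  have key : (∫⁻ p, ENNReal.ofReal ((p.1 - p.2) ^ 2) ∂π')
      + 2 * ∫⁻ p, ENNReal.ofReal ((p.1 - c) * (p.2 - c)) ∂π'
      ≤ (∫⁻ p, ENNReal.ofReal ((p.1 - p.2) ^ 2) ∂π)
      + 2 * ∫⁻ p, ENNReal.ofReal ((p.1 - c) * (p.2 - c)) ∂π' := by
    rw [cost_identity c M π' haeπ']
    calc _ = (∫⁻ p, ENNReal.ofReal ((p.1 - c) ^ 2) ∂π) + ∫⁻ p, ENNReal.ofReal ((p.2 - c) ^ 2) ∂π := by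
          rw [hA, hB]
      _ = (∫⁻ p, ENNReal.ofReal ((p.1 - p.2) ^ 2) ∂π)
          + 2 * ∫⁻ p, ENNReal.ofReal ((p.1 - c) * (p.2 - c)) ∂π := (cost_identity c M π haeπ).symm
      _ ≤ _ := add_le_add_right (mul_le_mul_right hP 2) _
  exact (ENNReal.add_le_add_iff_right hPfin).1 key

end CostCompare

noncomputable def W2 (μ ν : Measure ℝ) : ℝ :=
  sInf {r | ∃ π : Measure (ℝ × ℝ), IsProbabilityMeasure π ∧
    π.map Prod.fst = μ ∧ π.map Prod.snd = ν ∧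
    r = (∫ p, (p.1 - p.2) ^ 2 ∂π) ^ (1 / 2 : ℝ)}

lemma W2_eq (xmin xmax : ℝ) (hx : xmin < xmax) {u v : Measure ℝ}
    (hu : memP2 xmin xmax u) (hv : memP2 xmin xmax v) :
    W2 u v = (∫ s in Ioo (0 : ℝ) 1, (icdf u s - icdf v s) ^ 2) ^ (1 / 2 : ℝ) := by
  obtain ⟨hup, hus, -⟩ := hu
  obtain ⟨hvp, hvs, -⟩ := hv
  haveI := hup; haveI := hvp
  haveI : IsProbabilityMeasure lam := lam_prob
  have hxx := hx.le
  have hΦ : Measurable (fun r => (qext xmax u r, qext xmax v r)) :=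
    (qext_measurable hxx hus).prodMk (qext_measurable hxx hvs)
  set πs := Measure.map (fun r => (qext xmax u r, qext xmax v r)) lam with hπs
  haveI hπsp : IsProbabilityMeasure πs := Measure.isProbabilityMeasure_map hΦ.aemeasurable
  have hcostm : AEStronglyMeasurable (fun p : ℝ × ℝ => (p.1 - p.2) ^ 2) πs :=
    ((continuous_fst.sub continuous_snd).pow 2).aestronglyMeasurable
  have hm1 : πs.map Prod.fst = u := by
    rw [hπs, Measure.map_map measurable_fst hΦ]
    exact map_qext hxx hus
  have hm2 : πs.map Prod.snd = v := by
    rw [hπs, Measure.map_map measurable_snd hΦ]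
    exact map_qext hxx hvs
  have hcost : ∫ p, (p.1 - p.2) ^ 2 ∂πs = ∫ s in Ioo (0 : ℝ) 1, (icdf u s - icdf v s) ^ 2 := by
    rw [hπs, integral_map hΦ.aemeasurable (by rw [← hπs]; exact hcostm)]
    refine setIntegral_congr_fun measurableSet_Ioo (fun r hr => ?_)
    simp only
    rw [qext_eq_icdf hr.1.le hr.2, qext_eq_icdf hr.1.le hr.2]
  have hRmem : (∫ s in Ioo (0 : ℝ) 1, (icdf u s - icdf v s) ^ 2) ^ (1 / 2 : ℝ) ∈
      {r | ∃ π : Measure (ℝ × ℝ), IsProbabilityMeasure π ∧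
        π.map Prod.fst = u ∧ π.map Prod.snd = v ∧
        r = (∫ p, (p.1 - p.2) ^ 2 ∂π) ^ (1 / 2 : ℝ)} :=
    ⟨πs, hπsp, hm1, hm2, by rw [hcost]⟩
  have h0 : 0 ≤ ∫ s in Ioo (0 : ℝ) 1, (icdf u s - icdf v s) ^ 2 := by
    rw [← hcost]; exact integral_nonneg fun p => sq_nonneg _
  have hlb : ∀ r ∈ {r | ∃ π : Measure (ℝ × ℝ), IsProbabilityMeasure π ∧
      π.map Prod.fst = u ∧ π.map Prod.snd = v ∧
      r = (∫ p, (p.1 - p.2) ^ 2 ∂π) ^ (1 / 2 : ℝ)},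
      (∫ s in Ioo (0 : ℝ) 1, (icdf u s - icdf v s) ^ 2) ^ (1 / 2 : ℝ) ≤ r := by
    rintro r ⟨π, hπp, h1, h2, rfl⟩
    haveI := hπp
    have hπae := coupling_ae h1 h2 hus hvs
    have hcostle : ∫ s in Ioo (0 : ℝ) 1, (icdf u s - icdf v s) ^ 2
        ≤ ∫ p, (p.1 - p.2) ^ 2 ∂π := by
      rw [← hcost]
      have heq1 : ∫ p, (p.1 - p.2) ^ 2 ∂πs
          = (∫⁻ p, ENNReal.ofReal ((p.1 - p.2) ^ 2) ∂πs).toReal :=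
        integral_eq_lintegral_of_nonneg_ae (ae_of_all _ fun p => sq_nonneg _) hcostm
      have heq2 : ∫ p, (p.1 - p.2) ^ 2 ∂π
          = (∫⁻ p, ENNReal.ofReal ((p.1 - p.2) ^ 2) ∂π).toReal :=
        integral_eq_lintegral_of_nonneg_ae (ae_of_all _ fun p => sq_nonneg _)
          ((continuous_fst.sub continuous_snd).pow 2).aestronglyMeasurable
      have hle : ∫⁻ p, ENNReal.ofReal ((p.1 - p.2) ^ 2) ∂πs
          ≤ ∫⁻ p, ENNReal.ofReal ((p.1 - p.2) ^ 2) ∂π :=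
        cost_compare hxx hus hvs h1 h2 hm1 hm2
          (fun q => le_trans (coupling_slice_le h1 h2 q) (pistar_slice_ge hxx hus hvs q))
      have hbd : ∀ᵐ p ∂π, (p.1 - p.2) ^ 2 ≤ (xmax - xmin) ^ 2 := by
        filter_upwards [hπae] with p hp
        nlinarith [hp.1.1, hp.1.2, hp.2.1, hp.2.2]
      have hfin : ∫⁻ p, ENNReal.ofReal ((p.1 - p.2) ^ 2) ∂π ≠ ⊤ :=
        ne_top_of_le_ne_top ENNReal.ofReal_ne_top (lint_le_const hbd)
      rw [heq1, heq2]
      exact ENNReal.toReal_mono hfin hle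
    exact Real.rpow_le_rpow h0 hcostle (by norm_num)
  rw [W2]
  exact le_antisymm (csInf_le ⟨_, fun r hr => hlb r hr⟩ hRmem) (le_csInf ⟨_, hRmem⟩ hlb)

/-- The map u ↦ icdf_u is an isometry from (P₂(Ω), W₂) into L²([0,1]), and its image
I = {icdf_u : u ∈ P₂(Ω)} is a convex set. -/
theorem stmt1 (xmin xmax : ℝ) (hx : xmin < xmax) :
    (∀ u v : Measure ℝ, memP2 xmin xmax u → memP2 xmin xmax v →
      W2 u v = (∫ s in Ioo (0 : ℝ) 1, (icdf u s - icdf v s) ^ 2) ^ (1 / 2 : ℝ)) ∧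
    Convex ℝ {f : ℝ → ℝ | ∃ μ : Measure ℝ, memP2 xmin xmax μ ∧ f = icdf μ} :=
  ⟨fun _ _ hu hv => W2_eq xmin xmax hx hu hv, convex_icdf xmin xmax hx.le⟩
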